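/- Let K be a positive integer, let δ ∈ (0, 1], and let p, p' : {1, ..., K} → ℝ satisfy δ ≤ p_s ≤ 1 and δ ≤ p'_s ≤ 1 for every s. Define DPR(p) = (min_s p_s) / (max_s p_s). Then |DPR(p) − DPR(p')| ≤ (2/δ²) · max_s |p_s − p'_s|. -/

import Mathlib

/-- Lipschitz continuity of the demographic parity ratio
`DPR(p) = (min_s p_s)/(max_s p_s)` on vectors with entries in `[δ, 1]`. -/
theorem dpr_lipschitz
    (K : ℕ) (hK : 0 < K) (δ : ℝ) (hδ0 : 0 < δ) (hδ1 : δ ≤ 1)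
    (p p' : Fin K → ℝ)
    (hp : ∀ s, δ ≤ p s ∧ p s ≤ 1) (hp' : ∀ s, δ ≤ p' s ∧ p' s ≤ 1)
    (hne : (Finset.univ : Finset (Fin K)).Nonempty) :
    |Finset.univ.inf' hne p / Finset.univ.sup' hne p -
        Finset.univ.inf' hne p' / Finset.univ.sup' hne p'| ≤
      (2 / δ ^ 2) * Finset.univ.sup' hne (fun s => |p s - p' s|) := by
  set m := Finset.univ.inf' hne p with hm
  set M := Finset.univ.sup' hne p with hM
  set m' := Finset.univ.inf' hne p' with hm'
  set M' := Finset.univ.sup' hne p' with hM'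
  set ε := Finset.univ.sup' hne (fun s => |p s - p' s|) with hε
  have hεs : ∀ s : Fin K, |p s - p' s| ≤ ε := fun s =>
    Finset.le_sup' (fun s => |p s - p' s|) (Finset.mem_univ s)
  -- bounds on m, M, m', M'
  obtain ⟨s0, _⟩ := id hne
  have hmδ : δ ≤ m := Finset.le_inf' _ _ fun s _ => (hp s).1
  have hm1 : m ≤ 1 := le_trans (Finset.inf'_le _ (Finset.mem_univ s0)) (hp s0).2
  have hMδ : δ ≤ M := le_trans (hp s0).1 (Finset.le_sup' _ (Finset.mem_univ s0))
  have hM1 : M ≤ 1 := Finset.sup'_le _ _ fun s _ => (hp s).2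
  have hm'δ : δ ≤ m' := Finset.le_inf' _ _ fun s _ => (hp' s).1
  have hm'1 : m' ≤ 1 := le_trans (Finset.inf'_le _ (Finset.mem_univ s0)) (hp' s0).2
  have hM'δ : δ ≤ M' := le_trans (hp' s0).1 (Finset.le_sup' _ (Finset.mem_univ s0))
  have hM'1 : M' ≤ 1 := Finset.sup'_le _ _ fun s _ => (hp' s).2
  -- |m - m'| ≤ ε
  have hinf1 : m ≤ m' + ε := by
    obtain ⟨t, _, ht⟩ := Finset.exists_mem_eq_inf' hne p'
    calc m ≤ p t := Finset.inf'_le _ (Finset.mem_univ t)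
    _ ≤ p' t + |p t - p' t| := by
        have := abs_sub_abs_le_abs_sub (p t) (p' t)
        have h2 := le_abs_self (p t - p' t); linarith
    _ ≤ m' + ε := by rw [hm', ht]; exact add_le_add le_rfl (hεs t)
  have hinf2 : m' ≤ m + ε := by
    obtain ⟨t, _, ht⟩ := Finset.exists_mem_eq_inf' hne p
    calc m' ≤ p' t := Finset.inf'_le _ (Finset.mem_univ t)
    _ ≤ p t + |p t - p' t| := by
        have h2 := neg_abs_le (p t - p' t); linarith
    _ ≤ m + ε := by rw [hm, ht]; exact add_le_add le_rfl (hεs t)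
  -- |M - M'| ≤ ε
  have hsup1 : M ≤ M' + ε := by
    refine Finset.sup'_le _ _ fun s _ => ?_
    have h1 : p s ≤ p' s + |p s - p' s| := by
      have h2 := le_abs_self (p s - p' s); linarith
    calc p s ≤ p' s + |p s - p' s| := h1
    _ ≤ M' + ε := add_le_add (Finset.le_sup' _ (Finset.mem_univ s)) (hεs s)
  have hsup2 : M' ≤ M + ε := by
    refine Finset.sup'_le _ _ fun s _ => ?_
    have h1 : p' s ≤ p s + |p s - p' s| := by
      have h2 := neg_abs_le (p s - p' s); linarith
    calc p' s ≤ p s + |p s - p' s| := h1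
    _ ≤ M + ε := add_le_add (Finset.le_sup' _ (Finset.mem_univ s)) (hεs s)
  have hε0 : 0 ≤ ε := le_trans (abs_nonneg _) (hεs s0)
  have hMpos : 0 < M := lt_of_lt_of_le hδ0 hMδ
  have hM'pos : 0 < M' := lt_of_lt_of_le hδ0 hM'δ
  have key : m / M - m' / M' = (m * M' - m' * M) / (M * M') := by
    field_simp
  rw [key, abs_div, abs_of_pos (mul_pos hMpos hM'pos)]
  rw [div_le_iff₀ (mul_pos hMpos hM'pos)]
  have habs : |m * M' - m' * M| ≤ 2 * ε := by
    have : m * M' - m' * M = (m - m') * M' + m' * (M' - M) := by ring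
    rw [this]
    calc |(m - m') * M' + m' * (M' - M)| ≤ |(m - m') * M'| + |m' * (M' - M)| :=
          abs_add_le _ _
    _ = |m - m'| * |M'| + |m'| * |M' - M| := by rw [abs_mul, abs_mul]
    _ ≤ ε * 1 + 1 * ε := by
        apply add_le_add
        · exact mul_le_mul (abs_le.2 ⟨by linarith, by linarith⟩)
            (abs_le.2 ⟨by linarith, hM'1⟩) (abs_nonneg _) hε0
        · exact mul_le_mul (abs_le.2 ⟨by linarith, hm'1⟩)
            (abs_le.2 ⟨by linarith, by linarith⟩) (abs_nonneg _) zero_le_one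
    _ = 2 * ε := by ring
  calc |m * M' - m' * M| ≤ 2 * ε := habs
  _ ≤ 2 / δ ^ 2 * ε * (M * M') := by
      rw [div_mul_eq_mul_div, div_mul_eq_mul_div, le_div_iff₀ (by positivity)]
      nlinarith [mul_le_mul hMδ hM'δ (le_of_lt hδ0) (le_trans (le_of_lt hδ0) hMδ)]
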